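/- arXiv:1603.00053 — 6 statements merged into one kernel-verified Lean document; each statement's English description precedes it below -/
import Mathlib

section
/- Let a, b > 0, let ℓ₁ : [−a,a] → ℝ and ℓ₂ : [−b,b] → ℝ be nondecreasing maps, and let φ : [−b,b] → [−a,a] be a nondecreasing map. Then for every ε > 0 there exist real numbers s, t with |s| ≤ ε and |t| ≤ ε such that φ({x ∈ [−b,b] : ℓ₂(x) + t = x}) ∩ {x ∈ [−a,a] : ℓ₁(x) + s = x} = ∅. -/
open Set

/-- Proposition A.1: two nondecreasing interval maps admit arbitrarily small
translations whose fixed point sets are unrelated via a nondecreasing map φ. -/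
theorem stmt_0 (a b : ℝ) (ha : 0 < a) (hb : 0 < b)
    (ℓ₁ ℓ₂ φ : ℝ → ℝ)
    (hℓ₁ : MonotoneOn ℓ₁ (Icc (-a) a))
    (hℓ₂ : MonotoneOn ℓ₂ (Icc (-b) b))
    (hφ : MonotoneOn φ (Icc (-b) b))
    (hφmap : MapsTo φ (Icc (-b) b) (Icc (-a) a)) :
    ∀ ε > 0, ∃ s t : ℝ, |s| ≤ ε ∧ |t| ≤ ε ∧
      φ '' {x | x ∈ Icc (-b) b ∧ ℓ₂ x + t = x} ∩
        {x | x ∈ Icc (-a) a ∧ ℓ₁ x + s = x} = ∅ := by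
  intro ε hε
  by_contra hcon
  push_neg at hcon
  have key : ∀ s t : ℝ, |s| ≤ ε → |t| ≤ ε →
      ∃ y, y ∈ Icc (-b) b ∧ ℓ₂ y + t = y ∧ ℓ₁ (φ y) + s = φ y := by
    intro s t hs ht
    obtain ⟨x, hx⟩ := hcon s t hs ht
    obtain ⟨⟨y, ⟨hyI, hyt⟩, hyx⟩, hxI, hxs⟩ := hx
    exact ⟨y, hyI, hyt, by rw [hyx]; exact hxs⟩
  set C : ℝ := (2*b + (ℓ₂ b - ℓ₂ (-b))) + (2*a + (ℓ₁ a - ℓ₁ (-a))) with hCdef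
  have hmemb : b ∈ Icc (-b) b := ⟨by linarith, le_rfl⟩
  have hmemb' : -b ∈ Icc (-b) b := ⟨le_rfl, by linarith⟩
  have hmema : a ∈ Icc (-a) a := ⟨by linarith, le_rfl⟩
  have hmema' : -a ∈ Icc (-a) a := ⟨le_rfl, by linarith⟩
  have hL2 : 0 ≤ ℓ₂ b - ℓ₂ (-b) := sub_nonneg.2 (hℓ₂ hmemb' hmemb (by linarith))
  have hL1 : 0 ≤ ℓ₁ a - ℓ₁ (-a) := sub_nonneg.2 (hℓ₁ hmema' hmema (by linarith))
  have hCpos : 0 < C := by simp only [hCdef]; linarith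
  obtain ⟨N, hN⟩ := exists_nat_gt (C / ε + 1)
  have hN1 : (1:ℝ) < N := by
    have : 0 < C / ε := div_pos hCpos hε
    linarith
  have hN2 : 2 ≤ N := by exact_mod_cast (by exact_mod_cast hN1 : (1:ℕ) < N)
  have hNpos : (0:ℝ) < N := by linarith
  -- the grid values
  set v : Fin N → ℝ := fun i => ε * ((i : ℕ) + 1) / N with hvdef
  have hvabs : ∀ i : Fin N, |v i| ≤ ε := by
    intro i
    have h1 : ((i : ℕ) : ℝ) + 1 ≤ N := by exact_mod_cast i.isLt
    have h0 : 0 ≤ v i := by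
      apply div_nonneg _ (le_of_lt hNpos)
      positivity
    rw [abs_of_nonneg h0]
    rw [hvdef]
    rw [div_le_iff₀ hNpos]
    nlinarith
  have hgap' : ∀ i j : Fin N, (i:ℕ) < (j:ℕ) → ε / N ≤ v j - v i := by
    intro i j hij
    have h1 : ((i:ℕ):ℝ) + 1 ≤ ((j:ℕ):ℝ) := by exact_mod_cast hij
    have h2 : ε ≤ ε * (((j:ℕ):ℝ) + 1) - ε * (((i:ℕ):ℝ) + 1) := by nlinarith
    have h3 : ε / N ≤ (ε * (((j:ℕ):ℝ) + 1) - ε * (((i:ℕ):ℝ) + 1)) / N := by gcongr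
    have h4 : v j - v i = (ε * (((j:ℕ):ℝ) + 1) - ε * (((i:ℕ):ℝ) + 1)) / N := by
      simp only [hvdef]; ring
    linarith [h4 ▸ h3]
  have hgap : ∀ i j : Fin N, i ≠ j → ε / N ≤ |v i - v j| := by
    intro i j hij
    rcases lt_or_gt_of_ne (fun h : (i:ℕ) = (j:ℕ) => hij (Fin.ext h)) with h | h
    · have := hgap' i j h
      rw [abs_sub_comm]
      calc ε / N ≤ v j - v i := this
        _ ≤ |v j - v i| := le_abs_self _
    · have := hgap' j i h
      calc ε / N ≤ v i - v j := this
        _ ≤ |v i - v j| := le_abs_self _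
  have hεN : 0 < ε / N := div_pos hε hNpos
  -- choose witnesses
  choose y hyI hyt hys using fun p : Fin N × Fin N => key (v p.1) (v p.2) (hvabs _) (hvabs _)
  set F : ℝ → ℝ := fun x => x - ℓ₂ x with hFdef
  set G : ℝ → ℝ := fun x => φ x - ℓ₁ (φ x) with hGdef
  have hFy : ∀ p, F (y p) = v p.2 := by
    intro p; simp only [hFdef]; linarith [hyt p]
  have hGy : ∀ p, G (y p) = v p.1 := by
    intro p; simp only [hGdef]; linarith [hys p]
  have hyinj : Function.Injective y := by
    intro p q hpq
    have h1 : p.1 = q.1 := by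
      by_contra h
      have hg := hgap _ _ h
      rw [← hGy p, ← hGy q, hpq, sub_self, abs_zero] at hg
      linarith
    have h2 : p.2 = q.2 := by
      by_contra h
      have hg := hgap _ _ h
      rw [← hFy p, ← hFy q, hpq, sub_self, abs_zero] at hg
      linarith
    exact Prod.ext h1 h2
  set M := N * N with hMdef
  have hM4 : 4 ≤ M := by
    calc 4 = 2 * 2 := rfl
      _ ≤ N * N := Nat.mul_le_mul hN2 hN2
  set T := Finset.image y Finset.univ with hTdef
  have hTcard : T.card = M := by
    rw [hTdef, Finset.card_image_of_injective _ hyinj, Finset.card_univ]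
    simp [hMdef]
  have hwlt : ∀ k : ℕ, min k (M-1) < M := fun k =>
    lt_of_le_of_lt (min_le_right _ _) (by omega)
  set w : ℕ → ℝ := fun k => T.orderEmbOfFin hTcard ⟨min k (M-1), hwlt k⟩ with hwdef
  have hwmono : Monotone w := by
    intro k l hkl
    apply (T.orderEmbOfFin hTcard).monotone
    simp only [Fin.mk_le_mk]
    exact min_le_min hkl le_rfl
  have hwmem : ∀ k, ∃ p, y p = w k := by
    intro k
    have h : w k ∈ T := Finset.orderEmbOfFin_mem T hTcard _
    rw [hTdef] at h
    simpa using Finset.mem_image.mp h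
  have hwIcc : ∀ k, w k ∈ Icc (-b) b := by
    intro k
    obtain ⟨p, hp⟩ := hwmem k
    exact hp ▸ hyI p
  have hwlt' : ∀ k, k + 1 ≤ M - 1 → w k < w (k+1) := by
    intro k hk
    apply (T.orderEmbOfFin hTcard).strictMono
    simp only [Fin.mk_lt_mk]
    rw [min_eq_left (by omega), min_eq_left hk]
    omega
  -- pointwise variation bounds
  have hFk : ∀ k ∈ Finset.range (M-1),
      |F (w (k+1)) - F (w k)| ≤ (w (k+1) - w k) + (ℓ₂ (w (k+1)) - ℓ₂ (w k)) := by
    intro k _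
    have h1 : w k ≤ w (k+1) := hwmono (Nat.le_succ k)
    have h2 : ℓ₂ (w k) ≤ ℓ₂ (w (k+1)) := hℓ₂ (hwIcc k) (hwIcc (k+1)) h1
    simp only [hFdef]
    rw [abs_le]
    constructor <;> linarith
  have hGk : ∀ k ∈ Finset.range (M-1),
      |G (w (k+1)) - G (w k)| ≤ (φ (w (k+1)) - φ (w k)) + (ℓ₁ (φ (w (k+1))) - ℓ₁ (φ (w k))) := by
    intro k _
    have h1 : w k ≤ w (k+1) := hwmono (Nat.le_succ k)
    have h2 : φ (w k) ≤ φ (w (k+1)) := hφ (hwIcc k) (hwIcc (k+1)) h1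
    have h3 : ℓ₁ (φ (w k)) ≤ ℓ₁ (φ (w (k+1))) :=
      hℓ₁ (hφmap (hwIcc k)) (hφmap (hwIcc (k+1))) h2
    simp only [hGdef]
    rw [abs_le]
    constructor <;> linarith
  have hsumF : ∑ k ∈ Finset.range (M-1), |F (w (k+1)) - F (w k)| ≤ 2*b + (ℓ₂ b - ℓ₂ (-b)) := by
    calc ∑ k ∈ Finset.range (M-1), |F (w (k+1)) - F (w k)|
        ≤ ∑ k ∈ Finset.range (M-1), ((w (k+1) - w k) + (ℓ₂ (w (k+1)) - ℓ₂ (w k))) :=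
          Finset.sum_le_sum hFk
      _ = (w (M-1) - w 0) + (ℓ₂ (w (M-1)) - ℓ₂ (w 0)) := by
          rw [Finset.sum_add_distrib, Finset.sum_range_sub (fun k => w k),
            Finset.sum_range_sub (fun k => ℓ₂ (w k))]
      _ ≤ 2*b + (ℓ₂ b - ℓ₂ (-b)) := by
          have e1 := (hwIcc (M-1)).2
          have e2 := (hwIcc 0).1
          have e3 : ℓ₂ (-b) ≤ ℓ₂ (w 0) := hℓ₂ hmemb' (hwIcc 0) (hwIcc 0).1
          have e4 : ℓ₂ (w (M-1)) ≤ ℓ₂ b := hℓ₂ (hwIcc (M-1)) hmemb (hwIcc (M-1)).2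
          linarith
  have hsumG : ∑ k ∈ Finset.range (M-1), |G (w (k+1)) - G (w k)| ≤ 2*a + (ℓ₁ a - ℓ₁ (-a)) := by
    calc ∑ k ∈ Finset.range (M-1), |G (w (k+1)) - G (w k)|
        ≤ ∑ k ∈ Finset.range (M-1),
            ((φ (w (k+1)) - φ (w k)) + (ℓ₁ (φ (w (k+1))) - ℓ₁ (φ (w k)))) :=
          Finset.sum_le_sum hGk
      _ = (φ (w (M-1)) - φ (w 0)) + (ℓ₁ (φ (w (M-1))) - ℓ₁ (φ (w 0))) := by
          rw [Finset.sum_add_distrib, Finset.sum_range_sub (fun k => φ (w k)),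
            Finset.sum_range_sub (fun k => ℓ₁ (φ (w k)))]
      _ ≤ 2*a + (ℓ₁ a - ℓ₁ (-a)) := by
          have e1 := (hφmap (hwIcc (M-1))).2
          have e2 := (hφmap (hwIcc 0)).1
          have e3 : ℓ₁ (-a) ≤ ℓ₁ (φ (w 0)) := hℓ₁ hmema' (hφmap (hwIcc 0)) (hφmap (hwIcc 0)).1
          have e4 : ℓ₁ (φ (w (M-1))) ≤ ℓ₁ a := hℓ₁ (hφmap (hwIcc (M-1))) hmema (hφmap (hwIcc (M-1))).2
          linarith
  have hlow : ∀ k ∈ Finset.range (M-1),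
      ε / N ≤ |F (w (k+1)) - F (w k)| + |G (w (k+1)) - G (w k)| := by
    intro k hk
    obtain ⟨p, hp⟩ := hwmem (k+1)
    obtain ⟨q, hq⟩ := hwmem k
    have hkk : k + 1 ≤ M - 1 := by
      have := Finset.mem_range.mp hk; omega
    have hne : w k < w (k+1) := hwlt' k hkk
    have hpq : p ≠ q := by
      intro h
      rw [h, hq] at hp
      exact absurd hp (ne_of_lt hne)
    by_cases h2 : p.2 = q.2
    · have h1 : p.1 ≠ q.1 := fun h1 => hpq (Prod.ext h1 h2)
      have hg := hgap p.1 q.1 h1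
      rw [← hGy p, ← hGy q, hp, hq] at hg
      linarith [abs_nonneg (F (w (k+1)) - F (w k))]
    · have hg := hgap p.2 q.2 h2
      rw [← hFy p, ← hFy q, hp, hq] at hg
      linarith [abs_nonneg (G (w (k+1)) - G (w k))]
  have hcount : ((M-1 : ℕ) : ℝ) * (ε / N) ≤ C := by
    calc ((M-1:ℕ):ℝ) * (ε/N)
        = ∑ _k ∈ Finset.range (M-1), (ε/N) := by
          rw [Finset.sum_const, Finset.card_range, nsmul_eq_mul]
      _ ≤ ∑ k ∈ Finset.range (M-1),
            (|F (w (k+1)) - F (w k)| + |G (w (k+1)) - G (w k)|) :=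
          Finset.sum_le_sum hlow
      _ = (∑ k ∈ Finset.range (M-1), |F (w (k+1)) - F (w k)|)
          + ∑ k ∈ Finset.range (M-1), |G (w (k+1)) - G (w k)| :=
          Finset.sum_add_distrib
      _ ≤ C := by rw [hCdef]; linarith
  have h1 : (N:ℝ)*(N:ℝ) - (N:ℝ) ≤ ((M-1:ℕ):ℝ) := by
    have hnat : N*N - N ≤ M - 1 := by
      rw [hMdef]
      exact Nat.sub_le_sub_left (by omega) _
    have hcast : ((N*N - N : ℕ) : ℝ) ≤ ((M-1:ℕ):ℝ) := by exact_mod_cast hnat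
    have : ((N*N - N : ℕ) : ℝ) = (N:ℝ)*(N:ℝ) - (N:ℝ) := by
      rw [Nat.cast_sub (Nat.le_mul_of_pos_left N (by omega))]
      push_cast; ring
    linarith [this ▸ hcast]
  have hNε : C < ((N:ℝ) - 1) * ε := by
    have h5 : C / ε < (N:ℝ) - 1 := by linarith
    have h6 : C = (C/ε) * ε := by field_simp
    rw [h6]
    exact mul_lt_mul_of_pos_right h5 hε
  have heq : ((N:ℝ) - 1) * ε ≤ ((M-1:ℕ):ℝ) * (ε / N) := by
    have h7 : ((N:ℝ)-1)*ε = ((N:ℝ)*(N:ℝ) - N) * (ε/N) := by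
      field_simp
    rw [h7]
    exact mul_le_mul_of_nonneg_right h1 (le_of_lt hεN)
  linarith
end

section
/- Let f : [a,b] → ℝ have bounded variation on [a,b], let [a₁,b₁], …, [a_n,b_n] be finitely many subintervals of [a,b] whose open interiors (a_i,b_i) are pairwise disjoint, and suppose that the union of the images f([a₁,b₁]) ∪ … ∪ f([a_n,b_n]) contains an interval [c,d] with c ≤ d. Then ∑_{i=1}^{n} V(f;[a_i,b_i]) ≥ d − c. -/
open Set

/-- Lemma A.2 (3): if the images of subintervals with pairwise disjoint interiors
cover an interval [c,d], the sum of the variations is at least d - c. -/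
theorem stmt_2 (a b : ℝ) (f : ℝ → ℝ)
    (hf : BoundedVariationOn f (Icc a b))
    (n : ℕ) (c' d' : Fin n → ℝ) (c d : ℝ) (hcd : c ≤ d)
    (hsub : ∀ i, Icc (c' i) (d' i) ⊆ Icc a b)
    (hdisj : ∀ i j, i ≠ j → Ioo (c' i) (d' i) ∩ Ioo (c' j) (d' j) = ∅)
    (hcover : Icc c d ⊆ ⋃ i, f '' Icc (c' i) (d' i)) :
    ENNReal.ofReal (d - c) ≤ ∑ i, eVariationOn f (Icc (c' i) (d' i)) := by
  have key : ∀ i, MeasureTheory.volume (f '' Icc (c' i) (d' i))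
      ≤ eVariationOn f (Icc (c' i) (d' i)) := by
    intro i
    calc MeasureTheory.volume (f '' Icc (c' i) (d' i))
        ≤ EMetric.diam (f '' Icc (c' i) (d' i)) := Real.volume_le_diam _
      _ ≤ eVariationOn f (Icc (c' i) (d' i)) := EMetric.diam_le (by
          rintro x ⟨u, hu, rfl⟩ y ⟨v, hv, rfl⟩
          exact eVariationOn.edist_le f hu hv)
  calc ENNReal.ofReal (d - c) = MeasureTheory.volume (Icc c d) := (Real.volume_Icc).symm
    _ ≤ MeasureTheory.volume (⋃ i, f '' Icc (c' i) (d' i)) := MeasureTheory.measure_mono hcover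
    _ ≤ ∑ i, MeasureTheory.volume (f '' Icc (c' i) (d' i)) :=
        MeasureTheory.measure_iUnion_fintype_le _ _
    _ ≤ _ := Finset.sum_le_sum (fun i _ => key i)
end

section
/- Let f : [a,b] → ℝ be a nondecreasing map. Then for every ε > 0 there exists δ > 0 such that for all x, y ∈ [a,b] with 0 < y − x < δ, either f(y) − f(x) < ε, or there exists z ∈ [x,y] with f₊(z) − f₋(z) ≥ ε/2 (i.e., f has a jump of size ε/2 between x and y). -/
open Set

/-- The left limit f₋(z) of a nondecreasing map f : [a,b] → ℝ:
f₋(z) = sup {f w : w ∈ [a,b], w < z} for z > a, and f₋(a) = f(a). -/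
noncomputable def leftLimit (f : ℝ → ℝ) (a b z : ℝ) : ℝ :=
  if z ≤ a then f a else sSup (f '' {w | w ∈ Set.Icc a b ∧ w < z})

/-- The right limit f₊(z) of a nondecreasing map f : [a,b] → ℝ:
f₊(z) = inf {f w : w ∈ [a,b], w > z} for z < b, and f₊(b) = f(b). -/
noncomputable def rightLimit (f : ℝ → ℝ) (a b z : ℝ) : ℝ :=
  if b ≤ z then f b else sInf (f '' {w | w ∈ Set.Icc a b ∧ z < w})

/-- Lemma A.3 (Lemma l.aux): for a nondecreasing f on [a,b] and ε > 0 there is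
δ > 0 such that if 0 < y - x < δ then either f(y) - f(x) < ε or f has a jump
of size ε/2 in [x,y]. -/
theorem stmt_3 (a b : ℝ) (hab : a ≤ b) (f : ℝ → ℝ)
    (hf : MonotoneOn f (Icc a b)) :
    ∀ ε > 0, ∃ δ > 0, ∀ x ∈ Icc a b, ∀ y ∈ Icc a b,
      0 < y - x → y - x < δ →
      f y - f x < ε ∨ ∃ z ∈ Icc x y, ε / 2 ≤ rightLimit f a b z - leftLimit f a b z := by
  intro ε hε
  have hbdd : ∀ x ∈ Icc a b, f a ≤ f x ∧ f x ≤ f b := fun x hx =>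
    ⟨hf (left_mem_Icc.2 hab) hx hx.1, hf hx (right_mem_Icc.2 hab) hx.2⟩
  have key : ∀ z : Icc a b, ∃ U : Set ℝ, IsOpen U ∧ (z : ℝ) ∈ U ∧
      ∀ x ∈ Icc a b, ∀ y ∈ Icc a b, x ∈ U → y ∈ U → x < y →
        (f y - f x < ε ∨ ∃ z' ∈ Icc x y,
          ε / 2 ≤ rightLimit f a b z' - leftLimit f a b z') := by
    rintro ⟨z, hz⟩
    simp only
    have hbA : BddAbove (f '' {w | w ∈ Icc a b ∧ w < z}) := by
      refine ⟨f b, ?_⟩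
      rintro _ ⟨w, ⟨hw, _⟩, rfl⟩
      exact (hbdd w hw).2
    have hbB : BddBelow (f '' {w | w ∈ Icc a b ∧ z < w}) := by
      refine ⟨f a, ?_⟩
      rintro _ ⟨w, ⟨hw, _⟩, rfl⟩
      exact (hbdd w hw).1
    have hL_le : ∀ y ∈ Icc a b, y < z → f y ≤ leftLimit f a b z := by
      intro y hy hyz
      rw [leftLimit, if_neg (not_le.2 (lt_of_le_of_lt hy.1 hyz))]
      exact le_csSup hbA ⟨y, ⟨hy, hyz⟩, rfl⟩
    have hR_ge : ∀ x ∈ Icc a b, z < x → rightLimit f a b z ≤ f x := by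
      intro x hx hzx
      rw [rightLimit, if_neg (not_le.2 (lt_of_lt_of_le hzx hx.2))]
      exact csInf_le hbB ⟨x, ⟨hx, hzx⟩, rfl⟩
    have hLfz : leftLimit f a b z ≤ f z := by
      rw [leftLimit]
      split_ifs with h
      · exact (hbdd z hz).1
      · refine csSup_le ⟨f a, ⟨a, ⟨left_mem_Icc.2 hab, not_le.1 h⟩, rfl⟩⟩ ?_
        rintro _ ⟨w, ⟨hw, hwz⟩, rfl⟩
        exact hf hw hz hwz.le
    have hfzR : f z ≤ rightLimit f a b z := by
      rw [rightLimit]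
      split_ifs with h
      · exact (hbdd z hz).2
      · refine le_csInf ⟨f b, ⟨b, ⟨right_mem_Icc.2 hab, not_le.1 h⟩, rfl⟩⟩ ?_
        rintro _ ⟨w, ⟨hw, hzw⟩, rfl⟩
        exact hf hz hw hzw.le
    have hu : ∃ u < z, ∀ x ∈ Icc a b, u < x → leftLimit f a b z - ε / 4 < f x := by
      by_cases h : a < z
      · have hne : (f '' {w | w ∈ Icc a b ∧ w < z}).Nonempty :=
          ⟨f a, a, ⟨left_mem_Icc.2 hab, h⟩, rfl⟩
        have hlt : sSup (f '' {w | w ∈ Icc a b ∧ w < z}) - ε / 4 <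
            sSup (f '' {w | w ∈ Icc a b ∧ w < z}) := by linarith
        obtain ⟨s, ⟨u, ⟨huab, huz⟩, rfl⟩, hs⟩ := exists_lt_of_lt_csSup hne hlt
        refine ⟨u, huz, fun x hx hux => ?_⟩
        rw [leftLimit, if_neg (not_le.2 h)]
        exact lt_of_lt_of_le hs (hf huab hx hux.le)
      · refine ⟨a - 1, by linarith [hz.1], fun x hx _ => ?_⟩
        rw [leftLimit, if_pos (not_lt.1 h)]
        linarith [(hbdd x hx).1]
    have hv : ∃ v, z < v ∧ ∀ y ∈ Icc a b, y < v → f y < rightLimit f a b z + ε / 4 := by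
      by_cases h : z < b
      · have hne : (f '' {w | w ∈ Icc a b ∧ z < w}).Nonempty :=
          ⟨f b, b, ⟨right_mem_Icc.2 hab, h⟩, rfl⟩
        have hlt : sInf (f '' {w | w ∈ Icc a b ∧ z < w}) <
            sInf (f '' {w | w ∈ Icc a b ∧ z < w}) + ε / 4 := by linarith
        obtain ⟨s, ⟨v, ⟨hvab, hzv⟩, rfl⟩, hs⟩ := exists_lt_of_csInf_lt hne hlt
        refine ⟨v, hzv, fun y hy hyv => ?_⟩
        rw [rightLimit, if_neg (not_le.2 h)]
        exact lt_of_le_of_lt (hf hy hvab hyv.le) hs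
      · refine ⟨b + 1, by linarith [hz.2], fun y hy _ => ?_⟩
        rw [rightLimit, if_pos (not_lt.1 h)]
        linarith [(hbdd y hy).2]
    obtain ⟨u, huz, hu⟩ := hu
    obtain ⟨v, hzv, hv⟩ := hv
    refine ⟨Ioo u v, isOpen_Ioo, ⟨huz, hzv⟩, ?_⟩
    intro x hx y hy hxU hyU hxy
    by_cases hxz : x ≤ z
    · by_cases hzy : z ≤ y
      · by_cases hjump : ε / 2 ≤ rightLimit f a b z - leftLimit f a b z
        · exact Or.inr ⟨z, ⟨hxz, hzy⟩, hjump⟩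
        · left
          have h1 := hu x hx hxU.1
          have h2 := hv y hy hyU.2
          push_neg at hjump
          linarith
      · left
        have h1 := hL_le y hy (not_le.1 hzy)
        have h2 := hu x hx hxU.1
        linarith
    · left
      have h1 := hR_ge x hx (not_le.1 hxz)
      have h2 := hv y hy hyU.2
      linarith
  choose U hUopen hUmem hU using key
  obtain ⟨δ, hδ, hball⟩ := lebesgue_number_lemma_of_metric isCompact_Icc hUopen
    (fun w hw => mem_iUnion.2 ⟨⟨w, hw⟩, hUmem ⟨w, hw⟩⟩)
  refine ⟨δ, hδ, ?_⟩
  intro x hx y hy hpos hlt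
  obtain ⟨z, hz⟩ := hball x hx
  have hxB : x ∈ Metric.ball x δ := Metric.mem_ball_self hδ
  have hyB : y ∈ Metric.ball x δ := by
    rw [Metric.mem_ball, Real.dist_eq, abs_of_pos hpos]
    exact hlt
  exact hU z x hx y hy (hz hxB) (hz hyB) (by linarith)
end

section
/- Let a, b > 0, let ℓ₁ : [−a,a] → ℝ and φ : [−b,b] → [−a,a] be nondecreasing maps, and set g₁(x) = ℓ₁(x) − x. Then for any real numbers s₁ < s₂, the set closure(φ⁻¹(g₁⁻¹(s₁))) ∩ closure(φ⁻¹(g₁⁻¹(s₂))) contains at most finitely many points. -/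
open Set

/-- A set of reals containing no strictly increasing 3-chain is finite. -/
lemma aux_no3chain_finite {T : Set ℝ}
    (h : ∀ p ∈ T, ∀ q ∈ T, ∀ r ∈ T, p < q → q < r → False) : T.Finite := by
  by_contra hinf
  have hinf' : T.Infinite := hinf
  obtain ⟨s, hsub, hcard⟩ := hinf'.exists_subset_card_eq 3
  obtain ⟨p, q, r, hpq, hpr, hqr, rfl⟩ := Finset.card_eq_three.1 hcard
  have hp : p ∈ T := hsub (by simp)
  have hq : q ∈ T := hsub (by simp)
  have hr : r ∈ T := hsub (by simp)
  rcases hpq.lt_or_gt with h1 | h1 <;> rcases hpr.lt_or_gt with h2 | h2 <;>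
    rcases hqr.lt_or_gt with h3 | h3
  · exact h p hp q hq r hr h1 h3
  · exact h p hp r hr q hq h2 h3
  · linarith
  · exact h r hr p hp q hq h2 h1
  · exact h q hq p hp r hr h1 h2
  · linarith
  · exact h q hq r hr p hp h3 h2
  · exact h r hr q hq p hp h3 h1

/-- Lemma A.4 (1): the intersection of the closures of the φ-preimages of two
distinct level sets of g₁(x) = ℓ₁(x) - x is finite. -/
theorem stmt_4 (a b : ℝ) (ha : 0 < a) (hb : 0 < b)
    (ℓ₁ φ : ℝ → ℝ)
    (hℓ₁ : MonotoneOn ℓ₁ (Icc (-a) a))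
    (hφ : MonotoneOn φ (Icc (-b) b))
    (hφmap : MapsTo φ (Icc (-b) b) (Icc (-a) a))
    (s₁ s₂ : ℝ) (hs : s₁ < s₂) :
    (closure {x | x ∈ Icc (-b) b ∧ ℓ₁ (φ x) - φ x = s₁} ∩
      closure {x | x ∈ Icc (-b) b ∧ ℓ₁ (φ x) - φ x = s₂}).Finite := by
  set A := {x | x ∈ Icc (-b) b ∧ ℓ₁ (φ x) - φ x = s₁} with hA
  set B := {x | x ∈ Icc (-b) b ∧ ℓ₁ (φ x) - φ x = s₂} with hB
  set δ := s₂ - s₁ with hδdef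
  have hδ : 0 < δ := sub_pos.2 hs
  set F : ℝ → ℝ := fun x => ℓ₁ (φ x) + φ x with hFdef
  have hFmono : MonotoneOn F (Icc (-b) b) := fun x hx y hy hxy =>
    add_le_add (hℓ₁ (hφmap hx) (hφmap hy) (hφ hx hy hxy)) (hφ hx hy hxy)
  set S := closure A ∩ closure B with hS
  have hbb : -b ≤ b := by linarith
  have hSsub : S ⊆ Icc (-b) b := fun p hp =>
    (closure_minimal (fun x (hx : x ∈ A) => hx.1) isClosed_Icc) hp.1
  -- Step 1: near every point of S, F jumps by at least δ.
  have key : ∀ p ∈ S, ∀ ε > 0, ∃ u v, u ∈ Icc (-b) b ∧ v ∈ Icc (-b) b ∧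
      |u - p| < ε ∧ |v - p| < ε ∧ u ≤ v ∧ F u + δ ≤ F v := by
    intro p hp ε hε
    obtain ⟨x, hxA, hxd⟩ := Metric.mem_closure_iff.1 hp.1 ε hε
    obtain ⟨y, hyB, hyd⟩ := Metric.mem_closure_iff.1 hp.2 ε hε
    have hx1 : x ∈ Icc (-b) b := hxA.1
    have hy1 : y ∈ Icc (-b) b := hyB.1
    have hx2 : ℓ₁ (φ x) - φ x = s₁ := hxA.2
    have hy2 : ℓ₁ (φ y) - φ y = s₂ := hyB.2
    have hxd' : |x - p| < ε := by rw [Real.dist_eq, abs_sub_comm] at hxd; exact hxd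
    have hyd' : |y - p| < ε := by rw [Real.dist_eq, abs_sub_comm] at hyd; exact hyd
    rcases le_total x y with hxy | hxy
    · refine ⟨x, y, hx1, hy1, hxd', hyd', hxy, ?_⟩
      have hφxy : φ x ≤ φ y := hφ hx1 hy1 hxy
      simp only [hFdef]
      linarith
    · refine ⟨y, x, hy1, hx1, hyd', hxd', hxy, ?_⟩
      have hℓxy : ℓ₁ (φ y) ≤ ℓ₁ (φ x) := hℓ₁ (hφmap hy1) (hφmap hx1) (hφ hy1 hx1 hxy)
      simp only [hFdef]
      linarith
  -- Step 2: the running sup of F increases by δ across any three points of S.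
  set G : ℝ → ℝ := fun p => sSup (F '' (Icc (-b) b ∩ Iic p)) with hGdef
  have hbdd : ∀ p, BddAbove (F '' (Icc (-b) b ∩ Iic p)) := by
    intro p
    refine ⟨F b, fun z hz => ?_⟩
    obtain ⟨w, hw, rfl⟩ := hz
    exact hFmono hw.1 (right_mem_Icc.2 hbb) hw.1.2
  have hGlb : ∀ p ∈ Icc (-b) b, F (-b) ≤ G p :=
    fun p hp => le_csSup (hbdd p) ⟨-b, ⟨left_mem_Icc.2 hbb, hp.1⟩, rfl⟩
  have hGub : ∀ p ∈ Icc (-b) b, G p ≤ F b := by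
    intro p hp
    refine csSup_le ⟨F (-b), ⟨-b, ⟨left_mem_Icc.2 hbb, hp.1⟩, rfl⟩⟩ ?_
    rintro z ⟨w, hw, rfl⟩
    exact hFmono hw.1 (right_mem_Icc.2 hbb) hw.1.2
  have step2 : ∀ p ∈ S, ∀ q ∈ S, ∀ r ∈ S, p < q → q < r → G p + δ ≤ G r := by
    intro p hp q hq r hr hpq hqr
    set ε := min (q - p) (r - q) / 2 with hεdef
    have hε : 0 < ε := by
      have h1 : 0 < q - p := by linarith
      have h2 : 0 < r - q := by linarith
      have := lt_min h1 h2
      positivity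
    obtain ⟨u, v, hu1, hv1, hud, hvd, huv, hjump⟩ := key q hq ε hε
    have hεp : ε ≤ (q - p) / 2 := by
      apply div_le_div_of_nonneg_right (min_le_left _ _) <;> norm_num
    have hεr : ε ≤ (r - q) / 2 := by
      apply div_le_div_of_nonneg_right (min_le_right _ _) <;> norm_num
    have hup : p < u := by
      have := abs_lt.1 hud
      linarith [this.1]
    have hvr : v ≤ r := by
      have := abs_lt.1 hvd
      linarith [this.2]
    have h1 : G p ≤ F u := by
      refine csSup_le ⟨F (-b), ⟨-b, ⟨left_mem_Icc.2 hbb, (hSsub hp).1⟩, rfl⟩⟩ ?_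
      rintro z ⟨w, hw, rfl⟩
      exact hFmono hw.1 hu1 (le_of_lt (lt_of_le_of_lt hw.2 hup))
    have h2 : F v ≤ G r := le_csSup (hbdd r) ⟨v, ⟨hv1, hvr⟩, rfl⟩
    linarith
  -- Step 3: bucket points of S by ⌊(G p - F(-b))/δ⌋.
  set c : ℝ → ℤ := fun p => ⌊(G p - F (-b)) / δ⌋ with hcdef
  set N : ℤ := ⌊(F b - F (-b)) / δ⌋ with hNdef
  have hcmem : ∀ p ∈ S, c p ∈ Finset.Icc (0 : ℤ) N := by
    intro p hp
    have h1 := hGlb p (hSsub hp)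
    have h2 := hGub p (hSsub hp)
    simp only [Finset.mem_Icc]
    constructor
    · exact Int.floor_nonneg.2 (div_nonneg (by linarith) hδ.le)
    · exact Int.floor_le_floor (by gcongr)
  have fiber_fin : ∀ k : ℤ, {p ∈ S | c p = k}.Finite := by
    intro k
    apply aux_no3chain_finite
    rintro p ⟨hpS, hpk⟩ q ⟨hqS, _⟩ r ⟨hrS, hrk⟩ hpq hqr
    have hstep := step2 p hpS q hqS r hrS hpq hqr
    have h1 : (k : ℝ) ≤ (G p - F (-b)) / δ := by
      rw [← hpk]; exact Int.floor_le _
    have h2 : (G r - F (-b)) / δ < k + 1 := by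
      rw [← hrk]; exact Int.lt_floor_add_one _
    have e1 : (k : ℝ) * δ ≤ G p - F (-b) := (le_div_iff₀ hδ).1 h1
    have e2 : G r - F (-b) < ((k : ℝ) + 1) * δ := (div_lt_iff₀ hδ).1 h2
    linarith
  have hsub : S ⊆ ⋃ k ∈ (Finset.Icc (0 : ℤ) N : Finset ℤ), {p ∈ S | c p = k} := by
    intro p hp
    exact Set.mem_biUnion (hcmem p hp) ⟨hp, rfl⟩
  exact Set.Finite.subset (Set.Finite.biUnion (Finset.Icc (0 : ℤ) N).finite_toSet (fun k _ => fiber_fin k)) hsub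
end

section
/- Let g : [−b,b] → ℝ have bounded variation on [−b,b] with V(g;[−b,b]) = M, let ε > 0, and let k be a positive integer with k > M/(2ε). Then there do not exist sets U₁, …, U_k ⊆ [−b,b], each a finite union of closed intervals, such that the collection of all these constituent closed intervals has pairwise disjoint open interiors and g(U_j) ⊇ [−ε,ε] for every j = 1, …, k. -/
open Set
open scoped ENNReal

lemma Icc_var_split (g : ℝ → ℝ) {a b c : ℝ} (hab : a ≤ b) (hbc : b ≤ c) :
    eVariationOn g (Icc a b) + eVariationOn g (Icc b c) = eVariationOn g (Icc a c) := by
  have := eVariationOn.Icc_add_Icc g (s := univ) hab hbc (mem_univ b)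
  simpa using this

lemma key_sum (g : ℝ → ℝ) {ι : Type*} [DecidableEq ι] (A B : ι → ℝ) :
    ∀ n (s : Finset ι), s.card ≤ n → ∀ c d : ℝ,
    (∀ i ∈ s, A i < B i → c ≤ A i ∧ B i ≤ d) →
    (∀ i ∈ s, ∀ j ∈ s, i ≠ j → Ioo (A i) (B i) ∩ Ioo (A j) (B j) = ∅) →
    ∑ i ∈ s, eVariationOn g (Icc (A i) (B i)) ≤ eVariationOn g (Icc c d) := by
  intro n
  induction n with
  | zero =>
    intro s hs c d _ _
    simp [Finset.card_eq_zero.mp (Nat.le_zero.mp hs)]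
  | succ n ih =>
    intro s hs c d hsub hdisj
    rcases s.eq_empty_or_nonempty with rfl | ⟨i, hi⟩
    · simp
    rw [← Finset.add_sum_erase _ _ hi]
    by_cases hAB : A i < B i
    · obtain ⟨hcA, hBd⟩ := hsub i hi hAB
      classical
      set s₁ := (s.erase i).filter (fun j => B j ≤ A i) with hs₁
      set s₂ := (s.erase i).filter (fun j => ¬ (B j ≤ A i)) with hs₂
      have hsplit : ∑ j ∈ s.erase i, eVariationOn g (Icc (A j) (B j))
          = ∑ j ∈ s₁, eVariationOn g (Icc (A j) (B j))
            + ∑ j ∈ s₂, eVariationOn g (Icc (A j) (B j)) :=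
        (Finset.sum_filter_add_sum_filter_not _ _ _).symm
      have hcard : (s.erase i).card ≤ n := by
        have := Finset.card_erase_of_mem hi
        omega
      have h1 : ∑ j ∈ s₁, eVariationOn g (Icc (A j) (B j)) ≤ eVariationOn g (Icc c (A i)) := by
        apply ih s₁ (le_trans (Finset.card_filter_le _ _) hcard)
        · intro j hj hj2
          have hjs : j ∈ s := Finset.mem_of_mem_erase (Finset.mem_of_mem_filter _ hj)
          exact ⟨(hsub j hjs hj2).1, (Finset.mem_filter.mp hj).2⟩
        · intro x hx y hy hxy
          exact hdisj x (Finset.mem_of_mem_erase (Finset.mem_of_mem_filter _ hx))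
            y (Finset.mem_of_mem_erase (Finset.mem_of_mem_filter _ hy)) hxy
      have h2 : ∑ j ∈ s₂, eVariationOn g (Icc (A j) (B j)) ≤ eVariationOn g (Icc (B i) d) := by
        apply ih s₂ (le_trans (Finset.card_filter_le _ _) hcard)
        · intro j hj hj2
          have hje := Finset.mem_of_mem_filter _ hj
          have hjs : j ∈ s := Finset.mem_of_mem_erase hje
          have hne : j ≠ i := Finset.ne_of_mem_erase hje
          have hdd := hdisj j hjs i hi hne
          have hnb : ¬ (B j ≤ A i) := (Finset.mem_filter.mp hj).2
          -- nondegenerate, disjoint from Ioo (A i) (B i), not left of it: must be right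
          have hBA : B i ≤ A j := by
            by_contra hcon
            push_neg at hcon
            have hx : max (A j) (A i) < min (B j) (B i) := by
              simp only [max_lt_iff, lt_min_iff]
              push_neg at hnb
              exact ⟨⟨hj2, hnb⟩, ⟨hcon, hAB⟩⟩
            obtain ⟨x, hx1, hx2⟩ := exists_between hx
            have : x ∈ Ioo (A j) (B j) ∩ Ioo (A i) (B i) := by
              constructor <;> constructor <;>
                [exact lt_of_le_of_lt (le_max_left _ _) hx1;
                 exact lt_of_lt_of_le hx2 (min_le_left _ _);
                 exact lt_of_le_of_lt (le_max_right _ _) hx1;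
                 exact lt_of_lt_of_le hx2 (min_le_right _ _)]
            rw [hdd] at this
            exact this
          exact ⟨hBA, (hsub j hjs hj2).2⟩
        · intro x hx y hy hxy
          exact hdisj x (Finset.mem_of_mem_erase (Finset.mem_of_mem_filter _ hx))
            y (Finset.mem_of_mem_erase (Finset.mem_of_mem_filter _ hy)) hxy
      calc eVariationOn g (Icc (A i) (B i)) + ∑ j ∈ s.erase i, eVariationOn g (Icc (A j) (B j))
          ≤ eVariationOn g (Icc (A i) (B i))
              + (eVariationOn g (Icc c (A i)) + eVariationOn g (Icc (B i) d)) := by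
            rw [hsplit]; exact add_le_add le_rfl (add_le_add h1 h2)
        _ = (eVariationOn g (Icc c (A i)) + eVariationOn g (Icc (A i) (B i)))
              + eVariationOn g (Icc (B i) d) := by ring
        _ = eVariationOn g (Icc c (B i)) + eVariationOn g (Icc (B i) d) := by
            rw [Icc_var_split g hcA hAB.le]
        _ = eVariationOn g (Icc c d) := Icc_var_split g (hcA.trans hAB.le) hBd
    · push_neg at hAB
      have hzero : eVariationOn g (Icc (A i) (B i)) = 0 := by
        apply eVariationOn.subsingleton
        intro x hx y hy
        have h1 : x = A i := le_antisymm (hx.2.trans hAB) hx.1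
        have h2 : y = A i := le_antisymm (hy.2.trans hAB) hy.1
        rw [h1, h2]
      rw [hzero, zero_add]
      apply ih _ (by rw [Finset.card_erase_of_mem hi]; omega)
      · exact fun j hj => hsub j (Finset.mem_of_mem_erase hj)
      · exact fun x hx y hy => hdisj x (Finset.mem_of_mem_erase hx) y (Finset.mem_of_mem_erase hy)


/-- The counting argument concluding the proof of Proposition A.1: if g has
bounded variation M on [-b,b] and k > M/(2ε), there are no k sets U₁,…,U_k in
[-b,b], each a finite union of closed intervals with all constituent intervals
having pairwise disjoint open interiors, such that g(U_j) ⊇ [-ε,ε] for all j. -/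
theorem stmt_10 (b : ℝ) (g : ℝ → ℝ) (M : ℝ)
    (hbv : BoundedVariationOn g (Icc (-b) b))
    (hM : (eVariationOn g (Icc (-b) b)).toReal = M)
    (ε : ℝ) (hε : 0 < ε) (k : ℕ) (hk : 0 < k) (hkM : M / (2 * ε) < (k : ℝ)) :
    ¬ ∃ (U : Fin k → Set ℝ) (T : Fin k → Finset (ℝ × ℝ)),
        (∀ j, U j = ⋃ p ∈ (T j : Set (ℝ × ℝ)), Icc p.1 p.2) ∧
        (∀ j, U j ⊆ Icc (-b) b) ∧
        (∀ j j', ∀ p ∈ T j, ∀ p' ∈ T j', (j, p) ≠ (j', p') →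
          Ioo p.1 p.2 ∩ Ioo p'.1 p'.2 = ∅) ∧
        (∀ j, Icc (-ε) ε ⊆ g '' U j) := by
  rintro ⟨U, T, hU, hUb, hdisj, himg⟩
  classical
  -- Step 1: per j, ofReal (2ε) ≤ ∑_{p ∈ T j} eVariationOn g (Icc p.1 p.2)
  have step1 : ∀ j, ENNReal.ofReal (2 * ε)
      ≤ ∑ p ∈ T j, eVariationOn g (Icc p.1 p.2) := by
    intro j
    have h1 : ENNReal.ofReal (2 * ε) = MeasureTheory.volume (Icc (-ε) ε) := by
      rw [Real.volume_Icc]; ring_nf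
    have h2 : MeasureTheory.volume (Icc (-ε) ε)
        ≤ MeasureTheory.volume (⋃ p ∈ (T j : Set (ℝ × ℝ)), g '' Icc p.1 p.2) := by
      apply MeasureTheory.measure_mono
      intro x hx
      have := himg j hx
      rw [hU j, image_iUnion₂] at this
      exact this
    have h3 : MeasureTheory.volume (⋃ p ∈ (T j : Set (ℝ × ℝ)), g '' Icc p.1 p.2)
        ≤ ∑ p ∈ T j, MeasureTheory.volume (g '' Icc p.1 p.2) :=
      MeasureTheory.measure_biUnion_finset_le _ _
    have h4 : ∀ p ∈ T j, MeasureTheory.volume (g '' Icc p.1 p.2)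
        ≤ eVariationOn g (Icc p.1 p.2) := by
      intro p _
      refine (Real.volume_le_diam _).trans (EMetric.diam_le ?_)
      rintro _ ⟨x, hx, rfl⟩ _ ⟨y, hy, rfl⟩
      exact eVariationOn.edist_le g hx hy
    calc ENNReal.ofReal (2 * ε) = MeasureTheory.volume (Icc (-ε) ε) := h1
      _ ≤ _ := h2.trans (h3.trans (Finset.sum_le_sum h4))
  -- Step 2: sum over all (j, p) is ≤ total variation
  set S : Finset ((_ : Fin k) × (ℝ × ℝ)) := Finset.univ.sigma T with hS
  have step2 : ∑ x ∈ S, eVariationOn g (Icc x.2.1 x.2.2)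
      ≤ eVariationOn g (Icc (-b) b) := by
    apply key_sum g (fun x => x.2.1) (fun x => x.2.2) S.card S le_rfl
    · rintro ⟨j, p⟩ hx hlt
      have hp : p ∈ T j := by simpa [hS] using hx
      have hsub : Icc p.1 p.2 ⊆ Icc (-b) b := by
        refine subset_trans ?_ (hUb j)
        rw [hU j]
        exact subset_biUnion_of_mem (u := fun p : ℝ × ℝ => Icc p.1 p.2) (show p ∈ (T j : Set (ℝ × ℝ)) from hp)
      have hmem : p.1 ∈ Icc (-b) b := hsub ⟨le_refl _, hlt.le⟩
      have hmem2 : p.2 ∈ Icc (-b) b := hsub ⟨hlt.le, le_refl _⟩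
      exact ⟨hmem.1, hmem2.2⟩
    · rintro ⟨j, p⟩ hx ⟨j', p'⟩ hy hne
      have hp : p ∈ T j := by simpa [hS] using hx
      have hp' : p' ∈ T j' := by simpa [hS] using hy
      apply hdisj j j' p hp p' hp'
      intro hcon
      apply hne
      obtain ⟨h1, h2⟩ := Prod.mk.injEq .. ▸ hcon
      subst h1; subst h2; rfl
  have step2' : ∑ j : Fin k, ∑ p ∈ T j, eVariationOn g (Icc p.1 p.2)
      ≤ eVariationOn g (Icc (-b) b) := by
    rw [Finset.sum_sigma] at step2
    exact step2
  -- Step 3: combine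
  have step3 : (k : ℝ≥0∞) * ENNReal.ofReal (2 * ε) ≤ eVariationOn g (Icc (-b) b) := by
    calc (k : ℝ≥0∞) * ENNReal.ofReal (2 * ε)
        = ∑ _j : Fin k, ENNReal.ofReal (2 * ε) := by
          simp [Finset.sum_const, mul_comm]
      _ ≤ ∑ j : Fin k, ∑ p ∈ T j, eVariationOn g (Icc p.1 p.2) :=
          Finset.sum_le_sum fun j _ => step1 j
      _ ≤ _ := step2'
  -- numeric contradiction
  have := ENNReal.toReal_mono hbv step3
  rw [hM, ENNReal.toReal_mul, ENNReal.toReal_natCast,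
    ENNReal.toReal_ofReal (by positivity)] at this
  have h2ε : (0:ℝ) < 2 * ε := by linarith
  rw [div_lt_iff₀ h2ε] at hkM
  nlinarith
end

section
/- For every δ > 0 and every ε with 0 < ε < δ/2 the following holds: if β : [0,1] → ℝ² is a C¹ curve, written β = (β₁, β₂), such that β′(t) ≠ 0 for all t ∈ [0,1], β(t) ∈ [0,1] × [−ε,ε] for all t ∈ [0,1], β₁(0) = 0 and β₁(1) = 1, then there exists t̃ ∈ [0,1] such that |β₂′(t̃)| < δ · |β₁′(t̃)|; in particular, at t̃ the tangent direction of β makes an angle less than arctan(δ) with the horizontal direction. -/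
open Set

/-- Local-coordinate form of the tubular-neighborhood Lemma 2.14: a regular C¹
curve crossing the strip [0,1] × [-ε,ε] (with 0 < ε < δ/2) from the left side
to the right side must at some point have |β₂'| < δ·|β₁'|, i.e. tangent
direction within angle arctan(δ) of the horizontal. -/
theorem stmt_11 (δ ε : ℝ) (hδ : 0 < δ) (hε : 0 < ε) (hεδ : ε < δ / 2)
    (β β' : ℝ → ℝ × ℝ)
    (hderiv : ∀ t ∈ Icc (0:ℝ) 1, HasDerivWithinAt β (β' t) (Icc (0:ℝ) 1) t)
    (hcont : ContinuousOn β' (Icc (0:ℝ) 1))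
    (hreg : ∀ t ∈ Icc (0:ℝ) 1, β' t ≠ 0)
    (hrange : ∀ t ∈ Icc (0:ℝ) 1, (β t).1 ∈ Icc (0:ℝ) 1 ∧ (β t).2 ∈ Icc (-ε) ε)
    (h0 : (β 0).1 = 0) (h1 : (β 1).1 = 1) :
    ∃ t ∈ Icc (0:ℝ) 1, |(β' t).2| < δ * |(β' t).1| := by
  by_contra hcon
  push_neg at hcon
  -- β₂' never vanishes on [0,1]
  have hβ2ne : ∀ t ∈ Icc (0:ℝ) 1, (β' t).2 ≠ 0 := by
    intro t ht h2
    have h := hcon t ht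
    rw [h2, abs_zero] at h
    have h1' : (β' t).1 = 0 := by
      have h2' := abs_nonneg (β' t).1
      have : |(β' t).1| = 0 := by nlinarith
      exact abs_eq_zero.mp this
    exact hreg t ht (Prod.ext h1' h2)
  have hc2 : ContinuousOn (fun t => (β' t).2) (Icc (0:ℝ) 1) := hcont.snd
  have h0mem : (0:ℝ) ∈ Icc (0:ℝ) 1 := by norm_num
  -- constant sign via IVT
  obtain ⟨s, hs1, hspos⟩ : ∃ s : ℝ, (s = 1 ∨ s = -1) ∧
      ∀ t ∈ Icc (0:ℝ) 1, 0 < s * (β' t).2 := by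
    have key : ∀ t ∈ Icc (0:ℝ) 1, ¬ ((β' 0).2 < 0 ∧ 0 < (β' t).2) := by
      rintro t ht ⟨ha, hb⟩
      have hsub : Icc (0:ℝ) t ⊆ Icc (0:ℝ) 1 := Icc_subset_Icc le_rfl ht.2
      have := intermediate_value_Icc ht.1 (hc2.mono hsub)
      obtain ⟨u, hu, hu0⟩ := this ⟨le_of_lt ha, le_of_lt hb⟩
      exact hβ2ne u (hsub hu) hu0
    have key' : ∀ t ∈ Icc (0:ℝ) 1, ¬ (0 < (β' 0).2 ∧ (β' t).2 < 0) := by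
      rintro t ht ⟨ha, hb⟩
      have hsub : Icc (0:ℝ) t ⊆ Icc (0:ℝ) 1 := Icc_subset_Icc le_rfl ht.2
      have := intermediate_value_Icc' ht.1 (hc2.mono hsub)
      obtain ⟨u, hu, hu0⟩ := this ⟨le_of_lt hb, le_of_lt ha⟩
      exact hβ2ne u (hsub hu) hu0
    rcases lt_or_gt_of_ne (hβ2ne 0 h0mem) with hneg | hpos
    · refine ⟨-1, Or.inr rfl, fun t ht => ?_⟩
      rcases lt_or_gt_of_ne (hβ2ne t ht) with h | h
      · nlinarith
      · exact absurd ⟨hneg, h⟩ (key t ht)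
    · refine ⟨1, Or.inl rfl, fun t ht => ?_⟩
      rcases lt_or_gt_of_ne (hβ2ne t ht) with h | h
      · exact absurd ⟨hpos, h⟩ (key' t ht)
      · nlinarith
  have hsabs : |s| = 1 := by rcases hs1 with h | h <;> rw [h] <;> norm_num
  -- the auxiliary monotone function
  set f : ℝ → ℝ := fun t => s * (β t).2 / δ - (β t).1 with hf
  have hβcont : ContinuousOn β (Icc (0:ℝ) 1) :=
    fun t ht => (hderiv t ht).continuousWithinAt
  have hfc : ContinuousOn f (Icc (0:ℝ) 1) :=
    ((continuousOn_const.mul hβcont.snd).div_const δ).sub hβcont.fst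
  have hfd : ∀ t ∈ interior (Icc (0:ℝ) 1),
      HasDerivAt f (s * (β' t).2 / δ - (β' t).1) t := by
    intro t ht
    rw [interior_Icc] at ht
    have hb : HasDerivAt β (β' t) t :=
      (hderiv t (Ioo_subset_Icc_self ht)).hasDerivAt (Icc_mem_nhds ht.1 ht.2)
    have h2 : HasDerivAt (fun t => (β t).2) (β' t).2 t := hb.snd
    have h1' : HasDerivAt (fun t => (β t).1) (β' t).1 t := hb.fst
    exact ((h2.const_mul s).div_const δ).sub h1'
  have hmono : MonotoneOn f (Icc (0:ℝ) 1) := by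
    apply monotoneOn_of_deriv_nonneg (convex_Icc 0 1) hfc
    · intro t ht
      exact (hfd t ht).differentiableAt.differentiableWithinAt
    · intro t ht
      rw [(hfd t ht).deriv]
      have ht' : t ∈ Icc (0:ℝ) 1 := interior_subset ht
      have hb := hcon t ht'
      have hsp := hspos t ht'
      have habs2 : |(β' t).2| = s * (β' t).2 := by
        rw [← abs_of_pos hsp, abs_mul, hsabs, one_mul]
      have h1abs : (β' t).1 ≤ |(β' t).1| := le_abs_self _
      rw [habs2] at hb
      rw [sub_nonneg]
      calc (β' t).1 ≤ |(β' t).1| := h1abs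
        _ ≤ s * (β' t).2 / δ := by
            rw [le_div_iff₀ hδ]; nlinarith
  have h1mem : (1:ℝ) ∈ Icc (0:ℝ) 1 := by norm_num
  have hle : f 0 ≤ f 1 := hmono h0mem h1mem zero_le_one
  simp only [hf, h0, h1] at hle
  -- hle : s * (β 0).2 / δ - 0 ≤ s * (β 1).2 / δ - 1
  have hδle : δ ≤ s * ((β 1).2 - (β 0).2) := by
    have h' : 1 ≤ (s * (β 1).2 - s * (β 0).2) / δ := by
      rw [sub_div]; linarith
    have h'' := (one_le_div hδ).mp h'
    rw [mul_sub]; linarith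
  have hb0 := (hrange 0 h0mem).2
  have hb1 := (hrange 1 h1mem).2
  have : s * ((β 1).2 - (β 0).2) ≤ 2 * ε := by
    rcases hs1 with h | h <;> rw [h] <;>
      simp only [mem_Icc] at hb0 hb1 <;> nlinarith [hb0.1, hb0.2, hb1.1, hb1.2]
  linarith
end
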